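/- Let Ω be a symmetric real n×n matrix with zero diagonal and let Γ(Ω) be the multiplicative monoid generated by the matrices Q_i = I + D_iΩ, i = 1,…,n. Then for every M ∈ Γ(Ω) and every vector v ∈ ℝⁿ, h(Mv) ≥ h(v), where h(v) = (1/2)vᵀΩv, and h(Mv) = h(v) implies Mv = v. -/

import Mathlib

open Matrix

lemma gen_step {n : ℕ} (Ω : Matrix (Fin n) (Fin n) ℝ) (i : Fin n) (v : Fin n → ℝ) :
    ((1 + single i i 1 * Ω) *ᵥ v) = v + Pi.single i ((Ω *ᵥ v) i) := by
  rw [add_mulVec, one_mulVec, ← Matrix.mulVec_mulVec]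
  congr 1
  funext j
  simp [mulVec, dotProduct, single, Pi.single_apply, ite_and, eq_comm]

lemma quad {n : ℕ} (Ω : Matrix (Fin n) (Fin n) ℝ) (hsymm : Ωᵀ = Ω)
    (hdiag : ∀ i, Ω i i = 0) (i : Fin n) (v : Fin n → ℝ) :
    ((1 + single i i 1 * Ω) *ᵥ v) ⬝ᵥ (Ω *ᵥ ((1 + single i i 1 * Ω) *ᵥ v))
      = v ⬝ᵥ (Ω *ᵥ v) + 2 * ((Ω *ᵥ v) i)^2 := by
  rw [gen_step]
  set t := (Ω *ᵥ v) i with ht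
  have h1 : ∀ w : Fin n → ℝ, (Pi.single i t : Fin n → ℝ) ⬝ᵥ (Ω *ᵥ w) = t * (Ω *ᵥ w) i := by
    intro w; simp [single_dotProduct]
  have h2 : (Ω *ᵥ (Pi.single i t : Fin n → ℝ)) = fun j => Ω j i * t := by
    funext j; simp [mulVec, dotProduct, Pi.single_apply]
  have hsym : v ⬝ᵥ (Ω *ᵥ (Pi.single i t : Fin n → ℝ)) = t * (Ω *ᵥ v) i := by
    rw [h2]
    simp [dotProduct, mulVec, Finset.mul_sum]
    congr 1; funext j
    rw [show Ω j i = Ω i j from by conv_lhs => rw [← hsymm, transpose_apply]]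
    ring
  rw [mulVec_add, dotProduct_add, add_dotProduct, add_dotProduct, hsym, h1, h1, h2]
  simp [hdiag i]
  ring

theorem stmt4 {n : ℕ} (Ω : Matrix (Fin n) (Fin n) ℝ) (hsymm : Ωᵀ = Ω)
    (hdiag : ∀ i, Ω i i = 0)
    (M : Matrix (Fin n) (Fin n) ℝ)
    (hM : M ∈ Submonoid.closure
      (Set.range fun i : Fin n => (1 : Matrix (Fin n) (Fin n) ℝ) + single i i 1 * Ω))
    (v : Fin n → ℝ) :
    let h : (Fin n → ℝ) → ℝ := fun w => (1/2) * (w ⬝ᵥ (Ω *ᵥ w))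
    h (M *ᵥ v) ≥ h v ∧ (h (M *ᵥ v) = h v → M *ᵥ v = v) := by
  intro h
  refine Submonoid.closure_induction
    (motive := fun M _ => ∀ w, h (M *ᵥ w) ≥ h w ∧ (h (M *ᵥ w) = h w → M *ᵥ w = w))
    ?_ ?_ ?_ hM v
  · rintro x ⟨i, rfl⟩ w
    have hq : h ((1 + single i i 1 * Ω) *ᵥ w) = h w + ((Ω *ᵥ w) i)^2 := by
      show (1/2) * _ = (1/2) * _ + _
      rw [quad Ω hsymm hdiag i w]; ring
    constructor
    · rw [hq]; nlinarith [sq_nonneg ((Ω *ᵥ w) i)]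
    · intro he
      rw [hq] at he
      have ht : (Ω *ᵥ w) i = 0 := by nlinarith [sq_nonneg ((Ω *ᵥ w) i)]
      rw [gen_step, ht]
      simp
  · intro w; simp
  · intro x y hx hy px py w
    have h1 := py w
    have h2 := px (y *ᵥ w)
    have hxy : (x * y) *ᵥ w = x *ᵥ (y *ᵥ w) := (Matrix.mulVec_mulVec w x y).symm
    rw [hxy]
    refine ⟨le_trans h1.1 h2.1, fun he => ?_⟩
    have hb : h (y *ᵥ w) = h w := le_antisymm (by linarith [h2.1]) h1.1
    have hyw := h1.2 hb
    rw [hyw] at he ⊢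
    exact (px w).2 he
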